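/- For every n ≥ 2, s^{(2)}_n = s^{(2)}_{n−1} + 2·W((s^{(2)}_n − 1)/2). -/

import Mathlib

/-- Moser function `m_r(n)`: reinterpret the base-`r` digits of `n` as base-`r²` digits,
i.e. `m_r(n) = Σ_i ν_i r^(2i)` where `n = Σ_i ν_i r^i` is the base-`r` expansion. -/
def moser (r n : ℕ) : ℕ := Nat.ofDigits (r ^ 2) (Nat.digits r n)

/-- `s^(r)_n = r · m_r(n−1) + 1` for `n ≥ 1`. -/
def moserS (r n : ℕ) : ℕ := r * moser r (n - 1) + 1

/-- The `i`-th base-`r` digit of `n` (0 if beyond the expansion). -/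
def dig (r n i : ℕ) : ℕ := (Nat.digits r n).getD i 0

/-- Josephus–Groër survivor function: with `M = N` if `N` is odd, `M = N − 1` otherwise,
and `M = Σ_j b_j 2^j` the binary expansion, `W(N) = 1 + Σ_{j odd} b_j 2^j`. -/
def W (N : ℕ) : ℕ :=
  let M := if N % 2 = 1 then N else N - 1
  1 + ((((Nat.digits 2 M).zipIdx.map Prod.swap).filter (fun p => p.1 % 2 = 1)).map (fun p => p.2 * 2 ^ p.1)).sum

/- ## Auxiliary development -/

def g : ℕ → ℕ
  | 0 => 0
  | (m+1) => 2 * (((m+1)/2) - g ((m+1)/2))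
decreasing_by exact Nat.div_lt_self (Nat.succ_pos m) one_lt_two

lemma g_eq (m : ℕ) : g m = 2 * (m / 2 - g (m / 2)) := by
  cases m with
  | zero => simp [g]
  | succ m => rw [g]

lemma g_le (m : ℕ) : g m ≤ m := by
  induction m using Nat.strong_induction_on with
  | _ m ih =>
    cases m with
    | zero => simp [g]
    | succ m =>
      rw [g_eq]
      have h := Nat.div_le_self (m+1) 2
      have := Nat.div_add_mod (m+1) 2
      omega

lemma g_two_mul (x : ℕ) : g (2 * x) = 2 * (x - g x) := by
  have h : 2 * x / 2 = x := by omega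
  rw [g_eq, h]

lemma g_two_mul_add_one (x : ℕ) : g (2 * x + 1) = 2 * (x - g x) := by
  have h : (2 * x + 1) / 2 = x := by omega
  have h2 : (2 * x + 1) / 2 = x := by omega
  rw [g_eq, h]

lemma g_four_mul (x : ℕ) : g (4 * x) = 4 * g x := by
  have h1 : (4 : ℕ) * x = 2 * (2 * x) := by ring
  rw [h1, g_two_mul, g_two_mul]
  have := g_le x
  omega

lemma g_four_mul_add_one (x : ℕ) : g (4 * x + 1) = 4 * g x := by
  have h1 : (4 : ℕ) * x + 1 = 2 * (2 * x) + 1 := by ring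
  rw [h1, g_two_mul_add_one, g_two_mul]
  have := g_le x
  omega

lemma g_four_mul_add_three (x : ℕ) : g (4 * x + 3) = 2 + 4 * g x := by
  have h1 : (4 : ℕ) * x + 3 = 2 * (2 * x + 1) + 1 := by ring
  rw [h1, g_two_mul_add_one, g_two_mul_add_one]
  have := g_le x
  omega

def sOdd (l : List ℕ) : ℕ :=
  (((l.zipIdx.map Prod.swap).filter (fun p => p.1 % 2 = 1)).map (fun p => p.2 * 2 ^ p.1)).sum

def sEven (l : List ℕ) : ℕ :=
  (((l.zipIdx.map Prod.swap).filter (fun p => p.1 % 2 = 0)).map (fun p => p.2 * 2 ^ p.1)).sum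

lemma enumFrom_shift (l : List ℕ) (n : ℕ) :
    ((((l.zipIdx (n+1)).map Prod.swap).filter (fun p => p.1 % 2 = 1)).map (fun p => p.2 * 2 ^ p.1)).sum
      = 2 * ((((l.zipIdx n).map Prod.swap).filter (fun p => p.1 % 2 = 0)).map (fun p => p.2 * 2 ^ p.1)).sum
    ∧ ((((l.zipIdx (n+1)).map Prod.swap).filter (fun p => p.1 % 2 = 0)).map (fun p => p.2 * 2 ^ p.1)).sum
      = 2 * ((((l.zipIdx n).map Prod.swap).filter (fun p => p.1 % 2 = 1)).map (fun p => p.2 * 2 ^ p.1)).sum := by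
  induction l generalizing n with
  | nil => simp
  | cons a l ih =>
    have h1 := (ih (n+1)).1
    have h2 := (ih (n+1)).2
    rcases Nat.even_or_odd n with he | ho
    · have hn0 : n % 2 = 0 := Nat.even_iff.mp he
      have hn1 : (n+1) % 2 = 1 := by omega
      simp [List.zipIdx_cons, hn0, hn1, h1, h2, pow_succ]
      ring
    · have hn1 : n % 2 = 1 := Nat.odd_iff.mp ho
      have hn0 : (n+1) % 2 = 0 := by omega
      simp [List.zipIdx_cons, hn0, hn1, h1, h2, pow_succ]
      ring

lemma sOdd_cons (a : ℕ) (l : List ℕ) : sOdd (a :: l) = 2 * sEven l := by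
  have h := (enumFrom_shift l 0).1
  simp [sOdd, sEven, List.zipIdx_cons] at h ⊢
  exact h

lemma sEven_cons (a : ℕ) (l : List ℕ) : sEven (a :: l) = a + 2 * sOdd l := by
  have h := (enumFrom_shift l 0).2
  simp [sOdd, sEven, List.zipIdx_cons] at h ⊢
  rw [h]

lemma sum_eq_ofDigits (l : List ℕ) : sEven l + sOdd l = Nat.ofDigits 2 l := by
  induction l with
  | nil => simp [sOdd, sEven]
  | cons a l ih =>
    rw [sOdd_cons, sEven_cons, Nat.ofDigits_cons]
    omega

lemma sOdd_digits (m : ℕ) : sOdd (Nat.digits 2 m) = g m := by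
  induction m using Nat.strong_induction_on with
  | _ m ih =>
    cases m with
    | zero => simp [sOdd, g]
    | succ m =>
      have hm : (0:ℕ) < m + 1 := Nat.succ_pos m
      rw [Nat.digits_def' (by norm_num : 1 < 2) hm, sOdd_cons]
      have hlt : (m+1)/2 < m+1 := Nat.div_lt_self hm one_lt_two
      have hof : Nat.ofDigits 2 (Nat.digits 2 ((m+1)/2)) = (m+1)/2 := Nat.ofDigits_digits 2 _
      have h2 := sum_eq_ofDigits (Nat.digits 2 ((m+1)/2))
      rw [hof] at h2
      have h3 := ih ((m+1)/2) hlt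
      rw [g_eq]
      omega

lemma W_eq (N : ℕ) : W N = 1 + g (if N % 2 = 1 then N else N - 1) := by
  unfold W
  split <;> rw [← sOdd_digits] <;> rfl

/- facts about `moser 2` -/

lemma moser_rec (m : ℕ) (hm : 0 < m) : moser 2 m = m % 2 + 4 * moser 2 (m / 2) := by
  unfold moser
  rw [Nat.digits_def' (by norm_num : 1 < 2) hm, Nat.ofDigits_cons]
  norm_num

lemma moser_zero : moser 2 0 = 0 := by simp [moser]

lemma moser_pos (m : ℕ) (hm : 0 < m) : 0 < moser 2 m := by
  induction m using Nat.strong_induction_on with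
  | _ m ih =>
    rw [moser_rec m hm]
    rcases Nat.eq_zero_or_pos (m / 2) with h | h
    · have : m % 2 = 1 := by omega
      omega
    · have := ih (m/2) (Nat.div_lt_self hm one_lt_two) h
      omega

lemma g_moser (m : ℕ) : g (moser 2 m) = 0 := by
  induction m using Nat.strong_induction_on with
  | _ m ih =>
    cases Nat.eq_zero_or_pos m with
    | inl h => subst h; simp [moser_zero, g]
    | inr hm =>
      rw [moser_rec m hm]
      have ihh := ih (m/2) (Nat.div_lt_self hm one_lt_two)
      rcases Nat.mod_two_eq_zero_or_one m with h | h <;> rw [h]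
      · simpa [ihh] using g_four_mul (moser 2 (m/2))
      · have hc : 1 + 4 * moser 2 (m/2) = 4 * moser 2 (m/2) + 1 := by omega
        rw [hc, g_four_mul_add_one, ihh]

lemma moser_mod_two (m : ℕ) : moser 2 m % 2 = m % 2 := by
  cases Nat.eq_zero_or_pos m with
  | inl h => simp [h, moser_zero]
  | inr hm => rw [moser_rec m hm]; omega

/-- key step: `f k = f (k-1) + 1 + g (f k - 1)` for `k ≥ 1`. -/
lemma moser_step (k : ℕ) (hk : 1 ≤ k) :
    moser 2 k = moser 2 (k - 1) + 1 + g (moser 2 k - 1) := by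
  induction k using Nat.strong_induction_on with
  | _ k ih =>
    rcases Nat.even_or_odd k with he | ho
    · -- k = 2j, j ≥ 1
      obtain ⟨j, rfl⟩ := he
      have hj : 1 ≤ j := by omega
      have hfk : moser 2 (j + j) = 4 * moser 2 j := by
        rw [moser_rec _ (by omega)]
        have : (j + j) / 2 = j := by omega
        rw [this]; omega
      have hfk1 : moser 2 (j + j - 1) = 1 + 4 * moser 2 (j - 1) := by
        rw [moser_rec _ (by omega)]
        have h1 : (j + j - 1) % 2 = 1 := by omega
        have h2 : (j + j - 1) / 2 = j - 1 := by omega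
        rw [h1, h2]
      have hpos : 1 ≤ moser 2 j := moser_pos j hj
      have hg : g (4 * moser 2 j - 1) = 2 + 4 * g (moser 2 j - 1) := by
        have h4 : 4 * moser 2 j - 1 = 4 * (moser 2 j - 1) + 3 := by omega
        rw [h4, g_four_mul_add_three]
      have ihj := ih j (by omega) hj
      rw [hfk, hfk1, hg]
      omega
    · -- k = 2j+1
      obtain ⟨j, rfl⟩ := ho
      have hfk : moser 2 (2 * j + 1) = 4 * moser 2 j + 1 := by
        rw [moser_rec _ (by omega)]
        have h1 : (2 * j + 1) % 2 = 1 := by omega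
        have h2 : (2 * j + 1) / 2 = j := by omega
        rw [h1, h2]; omega
      have hfk1 : moser 2 (2 * j + 1 - 1) = 4 * moser 2 j := by
        have h0 : 2 * j + 1 - 1 = 2 * j := by omega
        rw [h0]
        cases Nat.eq_zero_or_pos j with
        | inl h => simp [h, moser_zero]
        | inr hj =>
          rw [moser_rec _ (by omega)]
          have h2 : (2 * j) / 2 = j := by omega
          rw [h2]; omega
      have hg : g (4 * moser 2 j + 1 - 1) = 0 := by
        have h4 : 4 * moser 2 j + 1 - 1 = 4 * moser 2 j := by omega
        rw [h4, g_four_mul, g_moser]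
      rw [hfk, hfk1, hg]

lemma W_moser (k : ℕ) (hk : 1 ≤ k) : W (moser 2 k) = 1 + g (moser 2 k - 1) := by
  rw [W_eq]
  split_ifs with h
  · have hkodd : k % 2 = 1 := by rw [← moser_mod_two]; exact h
    have h0 : g (moser 2 k) = 0 := g_moser k
    have hfk : moser 2 k = 4 * moser 2 (k / 2) + 1 := by
      rw [moser_rec k (by omega), hkodd]; omega
    have h1 : g (moser 2 k - 1) = 0 := by
      rw [hfk]
      have hc : 4 * moser 2 (k/2) + 1 - 1 = 4 * moser 2 (k/2) := by omega
      rw [hc, g_four_mul, g_moser]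
    rw [h0, h1]
  · rfl

/-- For every `n ≥ 2`, `s^(2)_n = s^(2)_{n−1} + 2·W((s^(2)_n − 1)/2)`. -/
theorem moserS_step_W (n : ℕ) (hn : 2 ≤ n) :
    moserS 2 n = moserS 2 (n - 1) + 2 * W ((moserS 2 n - 1) / 2) := by
  have hk : 1 ≤ n - 1 := by omega
  have harg : (moserS 2 n - 1) / 2 = moser 2 (n - 1) := by
    unfold moserS; omega
  rw [harg]
  have hW := W_moser (n - 1) hk
  have hstep := moser_step (n - 1) hk
  unfold moserS
  have h2 : n - 1 - 1 = n - 2 := by omega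
  rw [h2] at hstep ⊢
  omega
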